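/- If λ = (λ₁,…,λ_n) ∈ ℝⁿ has pairwise distinct, strictly negative entries, then for every i ∈ {1,…,n} and every k ∈ {1,…,n-1} the Vandermonde basis functions satisfy the relative ordering a_{k, λ_{¬i}} · v_{k-1,λ}(t) ≥ a_{k-1, λ_{¬i}} · v_{k,λ}(t) for all t ≥ 0. -/

import Mathlib

open Finset

noncomputable def acoef {R : Type*} [CommRing R] {n : ℕ} (lam : Fin n → R) (k : ℤ) : R :=
  if 0 ≤ k ∧ k ≤ (n : ℤ) then
    (-1 : R) ^ (n - k.toNat) *
      ∑ I ∈ Finset.univ.powersetCard (n - k.toNat), ∏ i ∈ I, lam i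
  else 0

def removeEntry {α : Type*} {n : ℕ} (lam : Fin n → α) (i : Fin n) : Fin (n - 1) → α :=
  fun j => lam (Fin.cast (Nat.succ_pred_eq_of_pos i.pos)
    ((Fin.cast (Nat.succ_pred_eq_of_pos i.pos).symm i).succAbove j))


noncomputable def vbasisR {n : ℕ} (lam : Fin n → ℝ) (k : ℤ) (t : ℝ) : ℝ :=
  (-1 : ℝ) ^ (n - 1) *
    ∑ i : Fin n, acoef (removeEntry lam i) k /
      (∏ j ∈ Finset.univ.erase i, (lam j - lam i)) * Real.exp (lam i * t)

open Polynomial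

noncomputable def PP (S : Finset ℝ) : ℝ[X] := ∏ y ∈ S, (X - C y)

noncomputable def dd (S : Finset ℝ) (x : ℝ) : ℝ := ∏ y ∈ S.erase x, (x - y)

noncomputable def VV (S : Finset ℝ) (k : ℕ) (t : ℝ) : ℝ :=
  ∑ x ∈ S, (PP (S.erase x)).coeff k / dd S x * Real.exp (x * t)



lemma PP_monic (S : Finset ℝ) : (PP S).Monic :=
  monic_prod_of_monic _ _ fun y _ => monic_X_sub_C y

lemma PP_natDegree (S : Finset ℝ) : (PP S).natDegree = S.card := by
  unfold PP
  rw [natDegree_prod _ _ fun y _ => X_sub_C_ne_zero y]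
  simp [natDegree_X_sub_C]

lemma PP_coeff_card (S : Finset ℝ) : (PP S).coeff S.card = 1 := by
  have := (PP_monic S).coeff_natDegree
  rwa [PP_natDegree] at this

lemma PP_coeff_zero_of_lt {S : Finset ℝ} {k : ℕ} (h : S.card < k) : (PP S).coeff k = 0 :=
  coeff_eq_zero_of_natDegree_lt (by rwa [PP_natDegree])

lemma PP_insert {x : ℝ} {S : Finset ℝ} (hx : x ∉ S) :
    PP (insert x S) = (X - C x) * PP S := by
  unfold PP; rw [Finset.prod_insert hx]

lemma PP_erase {x : ℝ} {S : Finset ℝ} (hx : x ∈ S) :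
    PP S = (X - C x) * PP (S.erase x) := by
  unfold PP; exact (Finset.mul_prod_erase _ _ hx).symm

lemma coeff_X_sub_C_mul_succ (x : ℝ) (p : ℝ[X]) (j : ℕ) :
    ((X - C x) * p).coeff (j + 1) = p.coeff j - x * p.coeff (j + 1) := by
  rw [sub_mul, coeff_sub, coeff_X_mul, coeff_C_mul]

lemma coeff_X_sub_C_mul_zero (x : ℝ) (p : ℝ[X]) :
    ((X - C x) * p).coeff 0 = - (x * p.coeff 0) := by
  rw [sub_mul, coeff_sub, mul_coeff_zero, coeff_X_zero, coeff_C_mul, zero_mul, zero_sub]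

lemma PP_coeff_nonneg {S : Finset ℝ} (hneg : ∀ y ∈ S, y < 0) (k : ℕ) :
    0 ≤ (PP S).coeff k := by
  induction S using Finset.induction_on generalizing k with
  | empty => unfold PP; simp [coeff_one]; positivity
  | insert x s hx ih =>
    have hx0 : x < 0 := hneg x (mem_insert_self x s)
    have hs : ∀ y ∈ s, y < 0 := fun y hy => hneg y (mem_insert_of_mem hy)
    rw [PP_insert hx]
    cases k with
    | zero => rw [coeff_X_sub_C_mul_zero]; nlinarith [ih hs 0]
    | succ j =>
      rw [coeff_X_sub_C_mul_succ]
      nlinarith [ih hs j, ih hs (j+1)]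

lemma PP_coeff_pos {S : Finset ℝ} (hneg : ∀ y ∈ S, y < 0) {k : ℕ} (hk : k ≤ S.card) :
    0 < (PP S).coeff k := by
  induction S using Finset.induction_on generalizing k with
  | empty =>
    simp only [Finset.card_empty, Nat.le_zero] at hk
    subst hk
    simp [PP, coeff_one]
  | insert x s hx ih =>
    have hx0 : x < 0 := hneg x (mem_insert_self x s)
    have hs : ∀ y ∈ s, y < 0 := fun y hy => hneg y (mem_insert_of_mem hy)
    rw [Finset.card_insert_of_notMem hx] at hk
    rw [PP_insert hx]
    cases k with
    | zero => rw [coeff_X_sub_C_mul_zero]; nlinarith [ih hs (Nat.zero_le _)]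
    | succ j =>
      rw [coeff_X_sub_C_mul_succ]
      have h1 : 0 < (PP s).coeff j := ih hs (Nat.lt_succ_iff.mp hk)
      nlinarith [PP_coeff_nonneg hs (j+1)]


lemma PP_coeff_logConcave {S : Finset ℝ} (hneg : ∀ y ∈ S, y < 0) :
    ∀ a b : ℕ, a ≤ b →
      (PP S).coeff a * (PP S).coeff (b + 1) ≤ (PP S).coeff (a + 1) * (PP S).coeff b := by
  induction S using Finset.induction_on with
  | empty =>
    intro a b _
    have h1 : (PP (∅ : Finset ℝ)).coeff (b+1) = 0 := by simp [PP, coeff_one]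
    have h2 : (PP (∅ : Finset ℝ)).coeff (a+1) = 0 := by simp [PP, coeff_one]
    rw [h1, h2]; simp
  | insert x s hx ih =>
    intro a b hab
    have hx0 : x < 0 := hneg x (mem_insert_self x s)
    have hs : ∀ y ∈ s, y < 0 := fun y hy => hneg y (mem_insert_of_mem hy)
    have ihs := ih hs
    have hnn := PP_coeff_nonneg hs
    set Q := fun j => (PP s).coeff j with hQ
    rw [PP_insert hx]
    rcases Nat.eq_or_lt_of_le hab with rfl | hlt
    · rw [mul_comm]
    -- a < b
    rcases b with _ | g
    · omega
    have hag : a ≤ g := Nat.lt_succ_iff.mp hlt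
    rcases a with _ | a'
    · -- a = 0
      rw [coeff_X_sub_C_mul_zero, coeff_X_sub_C_mul_succ, coeff_X_sub_C_mul_succ,
        coeff_X_sub_C_mul_succ]
      have h1 := ihs 0 (g+1) (by omega)
      nlinarith [mul_le_mul_of_nonneg_left h1 (mul_self_nonneg x),
        mul_nonneg (hnn 0) (hnn g),
        mul_nonneg (mul_nonneg (neg_nonneg.mpr hx0.le) (hnn 1)) (hnn g)]
    · -- a = a' + 1
      rw [coeff_X_sub_C_mul_succ, coeff_X_sub_C_mul_succ, coeff_X_sub_C_mul_succ,
        coeff_X_sub_C_mul_succ]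
      have h1 := ihs a' g (by omega)
      have h2 := ihs (a'+1) (g+1) (by omega)
      have h3 := ihs a' (g+1) (by omega)
      have h4 := ihs (a'+1) g (by omega)
      nlinarith [h1, mul_le_mul_of_nonneg_left h2 (mul_self_nonneg x),
        mul_le_mul_of_nonneg_left h3 (neg_nonneg.mpr hx0.le),
        mul_le_mul_of_nonneg_left h4 (neg_nonneg.mpr hx0.le)]


lemma dd_ne_zero {S : Finset ℝ} (x : ℝ) : dd S x ≠ 0 := by
  unfold dd
  rw [Finset.prod_ne_zero_iff]
  intro y hy h
  exact Finset.ne_of_mem_erase hy (sub_eq_zero.mp h).symm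

lemma dd_eval {S : Finset ℝ} (x : ℝ) : (PP (S.erase x)).eval x = dd S x := by
  unfold PP dd
  rw [eval_prod]
  simp

lemma dd_erase {S : Finset ℝ} {x z : ℝ} (hx : x ∈ S) (hz : z ∈ S) (hne : z ≠ x) :
    dd S z = (z - x) * dd (S.erase x) z := by
  unfold dd
  rw [show (S.erase x).erase z = (S.erase z).erase x from Finset.erase_right_comm,
    ← Finset.mul_prod_erase _ _ (Finset.mem_erase.mpr ⟨hne.symm, hx⟩)]

lemma Q_coeff_erase {S : Finset ℝ} {x z : ℝ} (hx : x ∈ S) (hz : z ∈ S) (hne : z ≠ x) (k : ℕ) :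
    (PP (S.erase z)).coeff k
      = (z - x) * (PP ((S.erase x).erase z)).coeff k + (PP (S.erase x)).coeff k := by
  have h1 : PP (S.erase z) = (X - C x) * PP ((S.erase z).erase x) :=
    PP_erase (Finset.mem_erase.mpr ⟨(Ne.symm hne), hx⟩)
  have h2 : PP (S.erase x) = (X - C z) * PP ((S.erase x).erase z) :=
    PP_erase (Finset.mem_erase.mpr ⟨hne, hz⟩)
  rw [Finset.erase_right_comm] at h1
  rw [h1, h2]
  have : (X - C x) * PP ((S.erase x).erase z)
      = C (z - x) * PP ((S.erase x).erase z) + (X - C z) * PP ((S.erase x).erase z) := by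
    ring_nf
    rw [map_sub]
    ring
  rw [this, coeff_add, coeff_C_mul]

lemma VV_eq_zero {S : Finset ℝ} {k : ℕ} (hk : S.card ≤ k) (t : ℝ) : VV S k t = 0 := by
  unfold VV
  apply Finset.sum_eq_zero
  intro x hx
  have hpos : 0 < S.card := Finset.card_pos.mpr ⟨x, hx⟩
  have hc : ((S.erase x).card) < k := by
    rw [Finset.card_erase_of_mem hx]
    omega
  rw [PP_coeff_zero_of_lt hc, zero_div, zero_mul]

lemma VV_erase {S : Finset ℝ} {x : ℝ} (hx : x ∈ S) (k : ℕ) (t : ℝ) :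
    VV S k t = VV (S.erase x) k t
      + (PP (S.erase x)).coeff k * VV S (S.card - 1) t := by
  set F : ℝ → ℝ := fun z => (PP (S.erase z)).coeff k / dd S z * Real.exp (z * t) with hF
  set H : ℝ → ℝ := fun z =>
    (PP (S.erase z)).coeff (S.card - 1) / dd S z * Real.exp (z * t) with hH
  have htop : ∀ z ∈ S, (PP (S.erase z)).coeff (S.card - 1) = 1 := by
    intro z hz
    rw [← Finset.card_erase_of_mem hz]
    exact PP_coeff_card _
  have hkey : ∀ z ∈ S.erase x, F z
      = (PP ((S.erase x).erase z)).coeff k / dd (S.erase x) z * Real.exp (z * t)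
        + (PP (S.erase x)).coeff k * H z := by
    intro z hz
    have hzS := Finset.mem_of_mem_erase hz
    have hne := Finset.ne_of_mem_erase hz
    have hzx : z - x ≠ 0 := sub_ne_zero.mpr hne
    have h2 : dd (S.erase x) z ≠ 0 := dd_ne_zero z
    simp only [hF, hH, htop z hzS, Q_coeff_erase hx hzS hne k, dd_erase hx hzS hne]
    field_simp
  have hFx : F x = (PP (S.erase x)).coeff k * H x := by
    simp only [hF, hH, htop x hx]
    ring
  calc VV S k t = F x + ∑ z ∈ S.erase x, F z := (Finset.add_sum_erase S F hx).symm
    _ = (PP (S.erase x)).coeff k * H x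
        + ∑ z ∈ S.erase x, ((PP ((S.erase x).erase z)).coeff k / dd (S.erase x) z
            * Real.exp (z * t) + (PP (S.erase x)).coeff k * H z) := by
        rw [hFx, Finset.sum_congr rfl hkey]
    _ = VV (S.erase x) k t
        + (PP (S.erase x)).coeff k * (H x + ∑ z ∈ S.erase x, H z) := by
        rw [Finset.sum_add_distrib, ← Finset.mul_sum]
        unfold VV
        ring
    _ = VV (S.erase x) k t + (PP (S.erase x)).coeff k * VV S (S.card - 1) t := by
        rw [Finset.add_sum_erase S H hx]
        simp only [VV, hH]


lemma eval_PP_erase_self {S : Finset ℝ} {w z : ℝ} (hw : w ∈ S) (hne : w ≠ z) :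
    (PP (S.erase z)).eval w = 0 := by
  unfold PP
  rw [eval_prod]
  apply Finset.prod_eq_zero (Finset.mem_erase.mpr ⟨hne, hw⟩)
  simp

/-- Lagrange-type identity: the sum of scaled nodal polynomials is 1. -/
lemma lagrange_sum_eq_one {S : Finset ℝ} (hS : S.Nonempty) :
    ∑ z ∈ S, Polynomial.C (dd S z)⁻¹ * PP (S.erase z) = 1 := by
  have hcard : 0 < S.card := Finset.card_pos.mpr hS
  set G : ℝ[X] := ∑ z ∈ S, Polynomial.C (dd S z)⁻¹ * PP (S.erase z) with hG
  have hdeg : G.natDegree ≤ S.card - 1 := by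
    apply Polynomial.natDegree_sum_le_of_forall_le
    intro z hz
    refine (natDegree_C_mul_le _ _).trans ?_
    rw [PP_natDegree, Finset.card_erase_of_mem hz]
  have heval : ∀ w ∈ S, G.eval w = 1 := by
    intro w hw
    rw [hG, Polynomial.eval_finset_sum, Finset.sum_eq_single w]
    · rw [eval_mul, eval_C, dd_eval, inv_mul_cancel₀ (dd_ne_zero w)]
    · intro z hz hne
      rw [eval_mul, eval_C, eval_PP_erase_self hw (Ne.symm hne), mul_zero]
    · intro h; exact absurd hw h
  have hzero : G - 1 = 0 := by
    apply Polynomial.eq_zero_of_natDegree_lt_card_of_eval_eq_zero' _ S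
    · intro w hw
      rw [eval_sub, heval w hw, eval_one, sub_self]
    · calc (G - 1).natDegree ≤ max G.natDegree (1 : ℝ[X]).natDegree :=
            Polynomial.natDegree_sub_le _ _
        _ < S.card := by
            rw [Polynomial.natDegree_one]
            simp only [max_lt_iff]
            omega
  exact sub_eq_zero.mp hzero

lemma VV_zero {S : Finset ℝ} (hS : S.Nonempty) (k : ℕ) :
    VV S k 0 = if k = 0 then 1 else 0 := by
  have h := lagrange_sum_eq_one hS
  have h2 := congrArg (fun p => Polynomial.coeff p k) h
  simp only [Polynomial.finset_sum_coeff, Polynomial.coeff_C_mul, Polynomial.coeff_one] at h2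
  unfold VV
  rw [← h2]
  apply Finset.sum_congr rfl
  intro z _
  rw [mul_zero, Real.exp_zero, mul_one, div_eq_inv_mul]


lemma VV_hasDerivAt (S : Finset ℝ) (k : ℕ) (t : ℝ) :
    HasDerivAt (fun t => VV S k t)
      (∑ x ∈ S, (PP (S.erase x)).coeff k / dd S x * (x * Real.exp (x * t))) t := by
  apply HasDerivAt.fun_sum
  intro x _
  have h1 : HasDerivAt (fun t : ℝ => x * t) x t := by
    simpa using (hasDerivAt_id t).const_mul x
  have h2 := h1.exp
  have h3 := h2.const_mul ((PP (S.erase x)).coeff k / dd S x)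
  exact h3.congr_deriv (by ring)

/-- ODE for the top basis function: (V_{m-1})' = x V_{m-1} + V'_{m-2} (removing x). -/
lemma VV_top_hasDerivAt {S : Finset ℝ} {x : ℝ} (hx : x ∈ S) (t : ℝ) :
    HasDerivAt (fun t => VV S (S.card - 1) t)
      (x * VV S (S.card - 1) t + VV (S.erase x) ((S.erase x).card - 1) t) t := by
  have h := VV_hasDerivAt S (S.card - 1) t
  convert h using 1
  have htop : ∀ z ∈ S, (PP (S.erase z)).coeff (S.card - 1) = 1 := by
    intro z hz
    rw [← Finset.card_erase_of_mem hz]; exact PP_coeff_card _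
  have htop' : ∀ z ∈ S.erase x, (PP ((S.erase x).erase z)).coeff ((S.erase x).card - 1) = 1 := by
    intro z hz
    rw [← Finset.card_erase_of_mem hz]; exact PP_coeff_card _
  unfold VV
  rw [← Finset.add_sum_erase _
      (fun z => (PP (S.erase z)).coeff (S.card - 1) / dd S z * Real.exp (z * t)) hx,
    ← Finset.add_sum_erase _
      (fun z => (PP (S.erase z)).coeff (S.card - 1) / dd S z * (z * Real.exp (z * t))) hx,
    mul_add, Finset.mul_sum, add_assoc, ← Finset.sum_add_distrib]
  congr 1
  · ring
  · apply Finset.sum_congr rfl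
    intro z hz
    have hzS := Finset.mem_of_mem_erase hz
    have hne := Finset.ne_of_mem_erase hz
    rw [htop z hzS, htop' z hz, dd_erase hx hzS hne]
    have hzx : z - x ≠ 0 := sub_ne_zero.mpr hne
    have h2 : dd (S.erase x) z ≠ 0 := dd_ne_zero z
    field_simp
    ring

/-- Positivity from the ODE f' = c f + g with g ≥ 0 on [0,∞) and f 0 ≥ 0. -/
lemma nonneg_of_ode (f g : ℝ → ℝ) (c : ℝ) (hf0 : 0 ≤ f 0)
    (hd : ∀ t, HasDerivAt f (c * f t + g t) t) (hg : ∀ t, 0 ≤ t → 0 ≤ g t) :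
    ∀ t, 0 ≤ t → 0 ≤ f t := by
  intro t ht
  set h : ℝ → ℝ := fun s => Real.exp (-c * s) * f s with hh
  have hdh : ∀ s, HasDerivAt h (Real.exp (-c * s) * g s) s := by
    intro s
    have h1 : HasDerivAt (fun s : ℝ => -c * s) (-c) s := by
      simpa using (hasDerivAt_id s).const_mul (-c)
    have h2 := (h1.exp).fun_mul (hd s)
    exact h2.congr_deriv (by ring)
  have hmono : MonotoneOn h (Set.Ici (0 : ℝ)) := by
    apply monotoneOn_of_deriv_nonneg (convex_Ici 0)
    · have hfc : Continuous f :=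
        continuous_iff_continuousAt.mpr fun s => (hd s).differentiableAt.continuousAt
      exact ((Real.continuous_exp.comp (continuous_const.mul continuous_id)).mul hfc).continuousOn
    · intro s _
      exact (hdh s).differentiableAt.differentiableWithinAt
    · intro s hs
      rw [(hdh s).deriv]
      have : (0 : ℝ) ≤ s := le_of_lt (by simpa [interior_Ici] using hs)
      exact mul_nonneg (Real.exp_pos _).le (hg s this)
  have h0 : h 0 ≤ h t := hmono (Set.mem_Ici.mpr le_rfl) (Set.mem_Ici.mpr ht) ht
  have hh0 : h 0 = f 0 := by simp [hh]
  have : 0 ≤ h t := le_trans (hh0 ▸ hf0) h0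
  have hft : f t = Real.exp (c * t) * h t := by
    rw [hh]
    rw [← mul_assoc, ← Real.exp_add]
    ring_nf
    simp
  rw [hft]
  exact mul_nonneg (Real.exp_pos _).le this


theorem master (S : Finset ℝ) (hneg : ∀ y ∈ S, y < 0) :
    (∀ t, 0 ≤ t → ∀ k, 0 ≤ VV S k t) ∧
    (∀ t, 0 ≤ t → ∀ a b : ℕ, a ≤ b →
      (PP S).coeff a * VV S (b + 1) t ≤ (PP S).coeff (a + 1) * VV S b t) := by
  induction S using Finset.induction_on with
  | empty =>
    constructor
    · intro t _ k; simp [VV]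
    · intro t _ a b _; simp [VV]
  | insert x s hx ih =>
    have hx0 : x < 0 := hneg x (mem_insert_self x s)
    have hs : ∀ y ∈ s, y < 0 := fun y hy => hneg y (mem_insert_of_mem hy)
    obtain ⟨ihc, ihb⟩ := ih hs
    have hxS : x ∈ insert x s := mem_insert_self x s
    have hers : (insert x s).erase x = s := erase_insert hx
    have Qnn : ∀ k, 0 ≤ (PP s).coeff k := PP_coeff_nonneg hs
    have hd : (0:ℝ) ≤ -x := by linarith
    -- part (a): nonnegativity of top basis function
    have hT : ∀ t, 0 ≤ t → 0 ≤ VV (insert x s) ((insert x s).card - 1) t := by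
      apply nonneg_of_ode _ (fun t => VV s (s.card - 1) t) x
      · rw [VV_zero ⟨x, hxS⟩]
        split_ifs <;> norm_num
      · intro t
        have := VV_top_hasDerivAt hxS t
        rwa [hers] at this
      · intro t ht; exact ihc t ht _
    -- part (c): nonnegativity of all basis functions
    have hc : ∀ t, 0 ≤ t → ∀ k, 0 ≤ VV (insert x s) k t := by
      intro t ht k
      rw [VV_erase hxS, hers]
      exact add_nonneg (ihc t ht k) (mul_nonneg (Qnn k) (hT t ht))
    refine ⟨hc, ?_⟩
    intro t ht a b hab
    by_cases hbig : (insert x s).card ≤ b + 1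
    · rw [VV_eq_zero hbig, mul_zero]
      exact mul_nonneg (PP_coeff_nonneg hneg _) (hc t ht b)
    · push_neg at hbig
      rw [VV_erase hxS (b+1) t, VV_erase hxS b t, hers]
      have hTn : 0 ≤ VV (insert x s) ((insert x s).card - 1) t := hT t ht
      have hC : ∀ j, (PP (insert x s)).coeff (j+1)
          = (PP s).coeff j - x * (PP s).coeff (j+1) := fun j => by
        rw [PP_insert hx, coeff_X_sub_C_mul_succ]
      have hC0 : (PP (insert x s)).coeff 0 = -(x * (PP s).coeff 0) := by
        rw [PP_insert hx, coeff_X_sub_C_mul_zero]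
      cases a with
      | zero =>
        rw [hC0, hC 0]
        have h2 := ihb t ht 0 b hab
        have h4 := PP_coeff_logConcave hs 0 b hab
        nlinarith [mul_le_mul_of_nonneg_left h2 hd,
          mul_le_mul_of_nonneg_left h4 (mul_nonneg hd hTn),
          mul_nonneg (Qnn 0) (ihc t ht b),
          mul_nonneg (mul_nonneg (Qnn 0) (Qnn b)) hTn]
      | succ a' =>
        rw [hC (a'+1), hC a']
        have h1 := ihb t ht a' b (by omega)
        have h2 := ihb t ht (a'+1) b hab
        have h3 := PP_coeff_logConcave hs a' b (by omega)
        have h4 := PP_coeff_logConcave hs (a'+1) b hab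
        nlinarith [h1, mul_le_mul_of_nonneg_left h3 hTn,
          mul_le_mul_of_nonneg_left h2 hd,
          mul_le_mul_of_nonneg_left h4 (mul_nonneg hd hTn)]



lemma acoef_eq_coeff {m : ℕ} (f : Fin m → ℝ) {k : ℕ} (hk : k ≤ m) :
    acoef f (k : ℤ) = (∏ j, (X - C (f j))).coeff k := by
  unfold acoef
  rw [if_pos ⟨Int.ofNat_nonneg k, by exact_mod_cast hk⟩, Int.toNat_natCast]
  have hprod : (∏ j : Fin m, (X - C (f j)))
      = ((Finset.univ.val.map f).map (fun t : ℝ => X - C t)).prod := by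
    rw [Multiset.map_map]; rfl
  have hcard : Multiset.card (Finset.univ.val.map f) = m := by simp
  rw [hprod, Multiset.prod_X_sub_C_coeff _ (by rw [hcard]; exact hk), hcard,
    Finset.esymm_map_val]

lemma removeEntry_eq_succAbove {m : ℕ} (lam : Fin (m + 1) → ℝ) (i : Fin (m + 1)) :
    removeEntry lam i = fun j => lam (i.succAbove j) := by
  funext j
  unfold removeEntry
  congr 1

lemma removeEntry_prod {n : ℕ} (lam : Fin n → ℝ) (hinj : Function.Injective lam) (i : Fin n) :
    ∏ j, (X - C (removeEntry lam i j))
      = PP ((Finset.univ.image lam).erase (lam i)) := by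
  rcases n with _ | m
  · exact absurd i.pos (by omega)
  have hmem : lam i ∈ Finset.univ.image lam := mem_image_of_mem lam (mem_univ i)
  apply mul_left_cancel₀ (X_sub_C_ne_zero (lam i))
  rw [← PP_erase hmem]
  rw [removeEntry_eq_succAbove]
  show (X - C (lam i)) * ∏ j : Fin m, (X - C (lam (i.succAbove j))) = PP (Finset.univ.image lam)
  rw [← Fin.prod_univ_succAbove (fun j => X - C (lam j)) i]
  unfold PP
  rw [Finset.prod_image (fun a _ b _ h => hinj h)]



lemma dd_image {n : ℕ} (lam : Fin n → ℝ) (hinj : Function.Injective lam) (i : Fin n) :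
    dd (Finset.univ.image lam) (lam i) = ∏ j ∈ Finset.univ.erase i, (lam i - lam j) := by
  unfold dd
  rw [← Finset.image_erase hinj, Finset.prod_image (fun a _ b _ h => hinj h)]

lemma denom_eq {n : ℕ} (lam : Fin n → ℝ) (hinj : Function.Injective lam) (i : Fin n) :
    ∏ j ∈ Finset.univ.erase i, (lam j - lam i)
      = (-1 : ℝ) ^ (n - 1) * dd (Finset.univ.image lam) (lam i) := by
  rw [dd_image lam hinj i]
  have h1 : ∀ j ∈ Finset.univ.erase i, lam j - lam i = -1 * (lam i - lam j) := by
    intro j _; ring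
  rw [Finset.prod_congr rfl h1, Finset.prod_mul_distrib, Finset.prod_const,
    Finset.card_erase_of_mem (mem_univ i), Finset.card_univ, Fintype.card_fin]

lemma vbasisR_eq_VV {n : ℕ} (lam : Fin n → ℝ) (hinj : Function.Injective lam) {k : ℕ}
    (hk : k ≤ n - 1) (t : ℝ) :
    vbasisR lam (k : ℤ) t = VV (Finset.univ.image lam) k t := by
  unfold vbasisR VV
  rw [Finset.sum_image (fun a _ b _ h => hinj h), Finset.mul_sum]
  apply Finset.sum_congr rfl
  intro i _
  rw [acoef_eq_coeff _ hk, removeEntry_prod lam hinj i, denom_eq lam hinj i]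
  have hdd : dd (Finset.univ.image lam) (lam i) ≠ 0 := dd_ne_zero _
  have hsq : ((-1 : ℝ)) ^ (n - 1) * ((-1 : ℝ)) ^ (n - 1) = 1 := by
    rw [← pow_add]
    exact Even.neg_one_pow ⟨n - 1, by ring⟩
  have hpow : ((-1 : ℝ)) ^ (n - 1) ≠ 0 := by
    intro h; rw [h] at hsq; simp at hsq
  field_simp

/-- Relative ordering: a_{k,λ_{¬i}} v_{k-1,λ}(t) ≥ a_{k-1,λ_{¬i}} v_{k,λ}(t). -/
theorem relative_vandermonde_basis_bound (n : ℕ) (lam : Fin n → ℝ)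
    (h : Function.Injective lam) (hneg : ∀ i, lam i < 0)
    (i : Fin n) (k : ℕ) (hk1 : 1 ≤ k) (hk : k < n) (t : ℝ) (ht : 0 ≤ t) :
    acoef (removeEntry lam i) ((k : ℤ) - 1) * vbasisR lam (k : ℤ) t ≤
      acoef (removeEntry lam i) (k : ℤ) * vbasisR lam ((k : ℤ) - 1) t := by
  obtain ⟨k', rfl⟩ : ∃ k', k = k' + 1 := ⟨k - 1, by omega⟩
  set S : Finset ℝ := Finset.univ.image lam with hS
  have hmem : lam i ∈ S := mem_image_of_mem lam (mem_univ i)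
  have hSneg : ∀ y ∈ S, y < 0 := by
    intro y hy
    obtain ⟨j, _, rfl⟩ := Finset.mem_image.mp hy
    exact hneg j
  have hcast : ((k' + 1 : ℕ) : ℤ) - 1 = ((k' : ℕ) : ℤ) := by push_cast; ring
  have hk'le : k' ≤ n - 1 := by omega
  have hkle : k' + 1 ≤ n - 1 := by omega
  rw [hcast, acoef_eq_coeff _ hk'le, acoef_eq_coeff _ hkle,
    vbasisR_eq_VV lam h hkle t, vbasisR_eq_VV lam h hk'le t,
    removeEntry_prod lam h i]
  rw [VV_erase hmem (k' + 1) t, VV_erase hmem k' t]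
  have hneg' : ∀ y ∈ S.erase (lam i), y < 0 := fun y hy =>
    hSneg y (Finset.mem_of_mem_erase hy)
  have hmain := (master (S.erase (lam i)) hneg').2 t ht k' k' le_rfl
  nlinarith [hmain]
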